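/- arXiv:1410.2800 — 2 statements merged into one kernel-verified Lean document; each statement's English description precedes it below -/
import Mathlib

section
/- Let L, T > 0, Ω = (-L/2, L/2) × (0, T), v > 0, Λ ≥ 1, and let μ be a finite nonnegative Borel measure on [1, Λ]. Then for every g ∈ L²(Ω; ℝ), the function λ ↦ T_g(v,λ) belongs to L²([1,Λ], μ) and satisfies ‖T_g(v,·)‖_{L²([1,Λ],μ)} ≤ ‖g‖_{L²(Ω)} · (L/(2v))^{1/2} · μ([1,Λ])^{1/2}; in particular g ↦ T_g(v,·) is a bounded linear operator from L²(Ω) into L²([1,Λ], μ). -/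
open MeasureTheory Complex Set

/-- Michell-type transform of a function `g` on the rectangle `Ω`. -/
noncomputable def michellTransform (L T v lam : ℝ) (g : ℝ × ℝ → ℝ) : ℂ :=
  ∫ p in (Ioo (-L/2) (L/2)) ×ˢ (Ioo (0:ℝ) T),
    (g p : ℂ) * Complex.exp (-(lam^2 * v * p.2 : ℝ)) *
      Complex.exp (-(Complex.I * lam * v * p.1))

theorem stmt1 (L T v Λ : ℝ) (hL : 0 < L) (hT : 0 < T) (hv : 0 < v) (hΛ : 1 ≤ Λ)
    (μ : Measure ℝ) [IsFiniteMeasure μ]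
    (g : ℝ × ℝ → ℝ)
    (hg : MemLp g 2 (volume.restrict ((Ioo (-L/2) (L/2)) ×ˢ (Ioo (0:ℝ) T)))) :
    MemLp (fun lam => michellTransform L T v lam g) 2 (μ.restrict (Icc 1 Λ)) ∧
    (∫ lam in Icc 1 Λ, ‖michellTransform L T v lam g‖ ^ 2 ∂μ) ≤
      (∫ p in (Ioo (-L/2) (L/2)) ×ˢ (Ioo (0:ℝ) T), (g p)^2) * (L / (2 * v)) *
        (μ (Icc 1 Λ)).toReal := by
  set Ω : Set (ℝ × ℝ) := (Ioo (-L/2) (L/2)) ×ˢ (Ioo (0:ℝ) T) with hΩ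
  set ν : Measure (ℝ × ℝ) := volume.restrict Ω with hν
  have hΩmeas : MeasurableSet Ω := (measurableSet_Ioo.prod measurableSet_Ioo)
  haveI : IsFiniteMeasure ν := by
    constructor
    rw [hν, Measure.restrict_apply_univ, hΩ, Measure.volume_eq_prod, Measure.prod_prod,
      Real.volume_Ioo, Real.volume_Ioo]
    exact ENNReal.mul_lt_top ENNReal.ofReal_lt_top ENNReal.ofReal_lt_top
  have hg1 : Integrable g ν := hg.integrable one_le_two
  -- the integrand as a function of (lam, p)
  set F : ℝ → ℝ × ℝ → ℂ := fun lam p =>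
    (g p : ℂ) * Complex.exp (-(lam^2 * v * p.2 : ℝ)) * Complex.exp (-(Complex.I * lam * v * p.1))
    with hF
  have hFmeas : ∀ lam, AEStronglyMeasurable (F lam) ν := by
    intro lam
    refine ((Complex.continuous_ofReal.comp_aestronglyMeasurable hg.1).mul
      (Continuous.aestronglyMeasurable (by fun_prop))).mul
      (Continuous.aestronglyMeasurable (by fun_prop))
  have hz_pos : ∀ᵐ p ∂ν, p ∈ Ω := ae_restrict_mem hΩmeas
  have hFbound : ∀ lam, ∀ᵐ p ∂ν, ‖F lam p‖ ≤ ‖g p‖ := by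
    intro lam
    filter_upwards [hz_pos] with p hp
    have hz : 0 < p.2 := hp.2.1
    have h1 : ‖Complex.exp (-(lam^2 * v * p.2 : ℝ))‖ ≤ 1 := by
      rw [← Complex.ofReal_neg, Complex.norm_exp_ofReal]
      apply Real.exp_le_one_iff.mpr
      have : 0 ≤ lam^2 * v * p.2 := by positivity
      linarith
    have h2 : ‖Complex.exp (-(Complex.I * lam * v * p.1))‖ = 1 := by
      rw [Complex.norm_exp]
      norm_num [Complex.mul_re, Complex.I_re, Complex.I_im]
    calc ‖F lam p‖ = ‖(g p : ℂ)‖ * ‖Complex.exp (-(lam^2 * v * p.2 : ℝ))‖ *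
          ‖Complex.exp (-(Complex.I * lam * v * p.1))‖ := by rw [hF]; simp [norm_mul]
      _ ≤ ‖(g p : ℂ)‖ * 1 * 1 := by
          apply mul_le_mul (mul_le_mul le_rfl h1 (norm_nonneg _) (norm_nonneg _))
            (le_of_eq h2) (norm_nonneg _) (by positivity)
      _ = ‖g p‖ := by simp
  have hFint : ∀ lam, Integrable (F lam) ν := fun lam =>
    (hg1.norm).mono' (hFmeas lam) (hFbound lam)
  -- continuity of the transform
  have hTcont : Continuous (fun lam => michellTransform L T v lam g) := by
    have : (fun lam => michellTransform L T v lam g) = fun lam => ∫ p, F lam p ∂ν := by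
      funext lam; rfl
    rw [this]
    refine continuous_of_dominated hFmeas hFbound hg1.norm ?_
    filter_upwards with p
    rw [hF]
    fun_prop
  -- uniform bound on the transform
  have hTbound : ∀ lam, ‖michellTransform L T v lam g‖ ≤ ∫ p, ‖g p‖ ∂ν := by
    intro lam
    calc ‖michellTransform L T v lam g‖ = ‖∫ p, F lam p ∂ν‖ := rfl
      _ ≤ ∫ p, ‖F lam p‖ ∂ν := norm_integral_le_integral_norm _
      _ ≤ ∫ p, ‖g p‖ ∂ν := integral_mono_ae (hFint lam).norm hg1.norm (hFbound lam)
  constructor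
  · exact MemLp.of_bound (hTcont.aestronglyMeasurable.restrict) _
      (Filter.Eventually.of_forall hTbound)
  -- the key pointwise estimate
  have key : ∀ lam ∈ Icc 1 Λ,
      ‖michellTransform L T v lam g‖ ^ 2 ≤
        (∫ p, (g p)^2 ∂ν) * (L / (2 * v)) := by
    intro lam hlam
    have hlam1 : (1:ℝ) ≤ lam := hlam.1
    set w : ℝ × ℝ → ℝ := fun p => Real.exp (-(v * p.2)) with hw
    have hwcont : Continuous w := by fun_prop
    have hw01 : ∀ᵐ p ∂ν, 0 < w p ∧ w p ≤ 1 := by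
      filter_upwards [hz_pos] with p hp
      refine ⟨Real.exp_pos _, Real.exp_le_one_iff.mpr (by nlinarith [hp.2.1])⟩
    have hIw : Integrable (fun p => ‖g p‖ * w p) ν := by
      refine hg1.norm.mono' (hg.1.norm.mul hwcont.aestronglyMeasurable.restrict) ?_
      filter_upwards [hw01] with p hp
      rw [Real.norm_of_nonneg (by positivity)]
      nlinarith [norm_nonneg (g p), hp.1, hp.2]
    -- step 1 : crude bound by |g| * w
    have step1 : ‖michellTransform L T v lam g‖ ≤ ∫ p, ‖g p‖ * w p ∂ν := by
      have hb : ∀ᵐ p ∂ν, ‖F lam p‖ ≤ ‖g p‖ * w p := by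
        filter_upwards [hz_pos] with p hp
        have hz : 0 < p.2 := hp.2.1
        have h1 : ‖Complex.exp (-(lam^2 * v * p.2 : ℝ))‖ ≤ w p := by
          rw [← Complex.ofReal_neg, Complex.norm_exp_ofReal, hw]
          apply Real.exp_le_exp.mpr
          have hl2 : (1:ℝ) ≤ lam^2 := one_le_pow₀ hlam1
          nlinarith [mul_pos hv hz]
        have h2 : ‖Complex.exp (-(Complex.I * lam * v * p.1))‖ = 1 := by
          rw [Complex.norm_exp]
          norm_num [Complex.mul_re, Complex.I_re, Complex.I_im]
        calc ‖F lam p‖ = ‖(g p : ℂ)‖ * ‖Complex.exp (-(lam^2 * v * p.2 : ℝ))‖ *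
              ‖Complex.exp (-(Complex.I * lam * v * p.1))‖ := by rw [hF]; simp [norm_mul]
          _ ≤ ‖(g p : ℂ)‖ * w p * 1 := by
              apply mul_le_mul (mul_le_mul le_rfl h1 (norm_nonneg _) (norm_nonneg _))
                (le_of_eq h2) (norm_nonneg _) (by positivity)
          _ = ‖g p‖ * w p := by simp
      calc ‖michellTransform L T v lam g‖ = ‖∫ p, F lam p ∂ν‖ := rfl
        _ ≤ ∫ p, ‖F lam p‖ ∂ν := norm_integral_le_integral_norm _
        _ ≤ ∫ p, ‖g p‖ * w p ∂ν := integral_mono_ae (hFint lam).norm hIw hb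
    -- step 2 : Cauchy-Schwarz
    have h22 : (ENNReal.ofReal (2:ℝ)) = 2 := by norm_num
    have hgnorm2 : MemLp (fun p => ‖g p‖) (ENNReal.ofReal (2:ℝ)) ν := by
      rw [h22]; exact hg.norm
    have hwmem : MemLp w (ENNReal.ofReal (2:ℝ)) ν := by
      rw [h22]
      refine MemLp.of_bound hwcont.aestronglyMeasurable.restrict 1 ?_
      filter_upwards [hw01] with p hp
      rw [Real.norm_of_nonneg hp.1.le]; exact hp.2
    have hCS : ∫ p, ‖g p‖ * w p ∂ν ≤
        (∫ p, ‖g p‖ ^ (2:ℝ) ∂ν) ^ (1/2 : ℝ) * (∫ p, w p ^ (2:ℝ) ∂ν) ^ (1/2 : ℝ) :=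
      integral_mul_le_Lp_mul_Lq_of_nonneg ⟨by norm_num, by norm_num, by norm_num⟩
        (Filter.Eventually.of_forall fun p => norm_nonneg _)
        (Filter.Eventually.of_forall fun p => (Real.exp_pos _).le) hgnorm2 hwmem
    have hg2eq : (∫ p, ‖g p‖ ^ (2:ℝ) ∂ν) = ∫ p, (g p)^2 ∂ν := by
      apply integral_congr_ae
      filter_upwards with p
      rw [show (2:ℝ) = ((2:ℕ):ℝ) by norm_num, Real.rpow_natCast]
      simp [_root_.sq_abs]
    -- step 3 : the weight integral
    have hwint : (∫ p, w p ^ (2:ℝ) ∂ν) ≤ L * (2*v)⁻¹ := by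
      have hμeq : ν = (volume.prod volume).restrict ((Ioo (-L/2) (L/2)) ×ˢ (Ioo (0:ℝ) T)) := by
        rw [hν, hΩ, ← Measure.volume_eq_prod]
      have heq : (∫ p, w p ^ (2:ℝ) ∂ν) =
          ∫ p in (Ioo (-L/2) (L/2)) ×ˢ (Ioo (0:ℝ) T),
            (fun _ : ℝ => (1:ℝ)) p.1 * (fun z => Real.exp (-(2*v) * z)) p.2
            ∂(volume.prod volume) := by
        rw [hμeq]
        apply integral_congr_ae
        filter_upwards with p
        rw [show (2:ℝ) = ((2:ℕ):ℝ) by norm_num, Real.rpow_natCast, hw]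
        show Real.exp (-(v * p.2)) ^ 2 = 1 * Real.exp (-(2*v) * p.2)
        rw [one_mul, sq, ← Real.exp_add]
        congr 1; ring
      have hprod := setIntegral_prod_mul (μ := (volume : Measure ℝ)) (ν := (volume : Measure ℝ))
        (fun _ : ℝ => (1:ℝ)) (fun z => Real.exp (-(2*v) * z)) (Ioo (-L/2) (L/2)) (Ioo (0:ℝ) T)
      rw [heq, hprod]
      have h1 : (∫ _ in Ioo (-L/2) (L/2), (1:ℝ)) = L := by
        rw [setIntegral_const, measureReal_def, Real.volume_Ioo, smul_eq_mul, mul_one,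
          ENNReal.toReal_ofReal (by linarith)]
        ring
      have h2 : (∫ z in Ioo (0:ℝ) T, Real.exp (-(2*v) * z)) ≤ (2*v)⁻¹ := by
        have hmono : (∫ z in Ioo (0:ℝ) T, Real.exp (-(2*v) * z)) ≤
            ∫ z in Ioi (0:ℝ), Real.exp (-(2*v) * z) := by
          apply setIntegral_mono_set (exp_neg_integrableOn_Ioi 0 (by positivity))
            (Filter.Eventually.of_forall fun z => (Real.exp_pos _).le)
            (HasSubset.Subset.eventuallyLE Ioo_subset_Ioi_self)
        have hval : (∫ z in Ioi (0:ℝ), Real.exp (-(2*v) * z)) = (2*v)⁻¹ := by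
          have := integral_comp_mul_left_Ioi (fun y => Real.exp (-y)) 0 (by positivity : (0:ℝ) < 2*v)
          simp only [mul_zero, neg_mul] at this ⊢
          rw [this, integral_exp_neg_Ioi_zero, smul_eq_mul, mul_one]
        rw [← hval]; exact hmono
      rw [h1]
      have hLpos : (0:ℝ) ≤ L := hL.le
      exact mul_le_mul_of_nonneg_left h2 hLpos
    -- combine
    have hA : (0:ℝ) ≤ ∫ p, (g p)^2 ∂ν := integral_nonneg fun p => sq_nonneg _
    have hB : (0:ℝ) ≤ ∫ p, w p ^ (2:ℝ) ∂ν :=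
      integral_nonneg fun p => Real.rpow_nonneg (Real.exp_pos _).le _
    have habs : (0:ℝ) ≤ ‖michellTransform L T v lam g‖ := norm_nonneg _
    calc ‖michellTransform L T v lam g‖ ^ 2
        ≤ ((∫ p, ‖g p‖ ^ (2:ℝ) ∂ν) ^ (1/2 : ℝ) * (∫ p, w p ^ (2:ℝ) ∂ν) ^ (1/2 : ℝ)) ^ 2 :=
          pow_le_pow_left₀ habs (step1.trans hCS) 2
      _ = (∫ p, (g p)^2 ∂ν) * (∫ p, w p ^ (2:ℝ) ∂ν) := by
          rw [mul_pow, ← Real.rpow_natCast ((∫ p, ‖g p‖ ^ (2:ℝ) ∂ν) ^ (1/2 : ℝ)) 2,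
            ← Real.rpow_natCast ((∫ p, w p ^ (2:ℝ) ∂ν) ^ (1/2 : ℝ)) 2,
            ← Real.rpow_mul (hg2eq ▸ hA), ← Real.rpow_mul hB]
          norm_num [hg2eq]
      _ ≤ (∫ p, (g p)^2 ∂ν) * (L * (2*v)⁻¹) := mul_le_mul_of_nonneg_left hwint hA
      _ = (∫ p, (g p)^2 ∂ν) * (L / (2 * v)) := by rw [div_eq_mul_inv]
  -- integrate the estimate over Icc 1 Λ
  have hInt1 : IntegrableOn (fun lam => ‖michellTransform L T v lam g‖ ^ 2)
      (Icc 1 Λ) μ := by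
    exact ((continuous_norm.comp hTcont).pow 2).integrableOn_Icc
  calc (∫ lam in Icc 1 Λ, ‖michellTransform L T v lam g‖ ^ 2 ∂μ)
      ≤ ∫ _ in Icc 1 Λ, (∫ p, (g p)^2 ∂ν) * (L / (2 * v)) ∂μ := by
        exact setIntegral_mono_on hInt1 (integrable_const _)
          measurableSet_Icc key
    _ = (∫ p, (g p)^2 ∂ν) * (L / (2 * v)) * (μ (Icc 1 Λ)).toReal := by
        rw [setIntegral_const, smul_eq_mul, mul_comm, measureReal_def]
end

section
/- Let L, T > 0, Ω = (-L/2, L/2) × (0, T), Λ ≥ 1, and let μ be a finite nonnegative Borel measure on [1, Λ]. Let (v_n) be a sequence of positive real numbers with v_n → v̄ > 0, and let (g_n) be a sequence in L²(Ω; ℝ) converging weakly in L²(Ω) to g (i.e. ∫_Ω g_n h → ∫_Ω g h for every h ∈ L²(Ω)). Then ∫_{[1,Λ]} |T_{g_n}(v_n, λ)|² dμ(λ) → ∫_{[1,Λ]} |T_g(v̄, λ)|² dμ(λ) as n → ∞. -/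
open MeasureTheory Complex Set Filter Topology

noncomputable def mker (w lam : ℝ) (p : ℝ × ℝ) : ℂ :=
  Complex.exp (-(lam^2 * w * p.2 : ℝ)) * Complex.exp (-(Complex.I * lam * w * p.1))

lemma mker_eq_exp (w lam : ℝ) (p : ℝ × ℝ) :
    mker w lam p = Complex.exp ((-(lam^2 * w * p.2 : ℝ) : ℂ) + (-(Complex.I * lam * w * p.1))) := by
  rw [mker, Complex.exp_add]

lemma mker_re_aux (w lam : ℝ) (p : ℝ × ℝ) :
    ((-(lam^2 * w * p.2 : ℝ) : ℂ) + (-(Complex.I * lam * w * p.1))).re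
      = -(lam^2 * w * p.2) := by
  have h : (Complex.I * lam * w * p.1 : ℂ) = ((lam * w * p.1 : ℝ) : ℂ) * Complex.I := by
    push_cast; ring
  rw [h]
  simp only [Complex.add_re, Complex.neg_re, Complex.mul_re, Complex.ofReal_re,
    Complex.ofReal_im, Complex.I_re, Complex.I_im]
  ring

lemma abs_mker_le_one {w : ℝ} (lam : ℝ) {p : ℝ × ℝ} (hw : 0 ≤ w) (hz : 0 ≤ p.2) :
    ‖mker w lam p‖ ≤ 1 := by
  rw [mker_eq_exp, Complex.norm_exp, mker_re_aux, Real.exp_le_one_iff]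
  nlinarith [mul_nonneg (mul_nonneg (sq_nonneg lam) hw) hz]

lemma continuous_mker (w : ℝ) (p : ℝ × ℝ) : Continuous fun lam => mker w lam p := by
  unfold mker; fun_prop

lemma continuous_mker' (w lam : ℝ) : Continuous fun p : ℝ × ℝ => mker w lam p := by
  unfold mker; fun_prop

lemma abs_mker_sub_le {L T Λ w1 w2 lam : ℝ} {p : ℝ × ℝ}
    (hw2 : 0 ≤ w2) (hz : 0 ≤ p.2) (hzT : p.2 ≤ T) (hx : |p.1| ≤ L/2)
    (hlam : |lam| ≤ Λ) (hΛ : 0 ≤ Λ)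
    (hC : (Λ^2*T + Λ*(L/2)) * |w1 - w2| ≤ 1) :
    ‖mker w1 lam p - mker w2 lam p‖
      ≤ 2 * ((Λ^2*T + Λ*(L/2)) * |w1 - w2|) := by
  set a1 : ℂ := (-(lam^2 * w1 * p.2 : ℝ) : ℂ) + (-(Complex.I * lam * w1 * p.1)) with ha1
  set a2 : ℂ := (-(lam^2 * w2 * p.2 : ℝ) : ℂ) + (-(Complex.I * lam * w2 * p.1)) with ha2
  have h1 : mker w1 lam p = Complex.exp a1 := mker_eq_exp _ _ _
  have h2 : mker w2 lam p = Complex.exp a2 := mker_eq_exp _ _ _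
  have hd : a1 - a2 = (-(lam^2 * (w1 - w2) * p.2 : ℝ) : ℂ)
      + (-(Complex.I * ((lam * (w1 - w2) * p.1 : ℝ) : ℂ))) := by
    rw [ha1, ha2]; push_cast; ring
  have habsd : ‖a1 - a2‖ ≤ (Λ^2*T + Λ*(L/2)) * |w1 - w2| := by
    rw [hd]
    refine le_trans (norm_add_le _ _) ?_
    have e1 : ‖(-(lam^2 * (w1 - w2) * p.2 : ℝ) : ℂ)‖ = |lam^2 * (w1 - w2) * p.2| := by
      rw [norm_neg, Complex.norm_real, Real.norm_eq_abs]
    have e2 : ‖(-(Complex.I * ((lam * (w1 - w2) * p.1 : ℝ) : ℂ)))‖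
        = |lam * (w1 - w2) * p.1| := by
      rw [norm_neg, norm_mul, Complex.norm_I, one_mul, Complex.norm_real, Real.norm_eq_abs]
    rw [e1, e2]
    have hlam2 : lam^2 ≤ Λ^2 := by
      have := pow_le_pow_left₀ (abs_nonneg lam) hlam 2
      rwa [← _root_.sq_abs lam]
    have hp2 : |p.2| ≤ T := by rw [_root_.abs_of_nonneg hz]; exact hzT
    have h1' : |lam^2 * (w1 - w2) * p.2| ≤ Λ^2 * T * |w1 - w2| := by
      calc |lam^2 * (w1 - w2) * p.2| = lam^2 * |w1 - w2| * |p.2| := by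
            rw [abs_mul, abs_mul, _root_.abs_of_nonneg (sq_nonneg lam)]
        _ ≤ Λ^2 * |w1 - w2| * T := by gcongr
        _ = Λ^2 * T * |w1 - w2| := by ring
    have h2' : |lam * (w1 - w2) * p.1| ≤ Λ * (L/2) * |w1 - w2| := by
      have hL2 : (0:ℝ) ≤ L/2 := le_trans (abs_nonneg p.1) hx
      calc |lam * (w1 - w2) * p.1| = |lam| * |w1 - w2| * |p.1| := by
            rw [abs_mul, abs_mul]
        _ ≤ Λ * |w1 - w2| * (L/2) := by gcongr
        _ = Λ * (L/2) * |w1 - w2| := by ring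
    calc |lam^2 * (w1 - w2) * p.2| + |lam * (w1 - w2) * p.1|
        ≤ Λ^2 * T * |w1 - w2| + Λ * (L/2) * |w1 - w2| := add_le_add h1' h2'
      _ = (Λ^2*T + Λ*(L/2)) * |w1 - w2| := by ring
  have key : Complex.exp a1 - Complex.exp a2 = Complex.exp a2 * (Complex.exp (a1 - a2) - 1) := by
    rw [mul_sub, ← Complex.exp_add, mul_one]; ring_nf
  rw [h1, h2, key, norm_mul]
  have habs2 : ‖Complex.exp a2‖ ≤ 1 := by
    rw [← h2]; exact abs_mker_le_one lam hw2 hz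
  have hle1 : ‖a1 - a2‖ ≤ 1 := le_trans habsd hC
  have hexp := Complex.norm_exp_sub_one_le hle1
  calc ‖Complex.exp a2‖ * ‖Complex.exp (a1 - a2) - 1‖
      ≤ 1 * (2 * ‖a1 - a2‖) := by
        apply mul_le_mul habs2 hexp (norm_nonneg _) zero_le_one
    _ ≤ 2 * ((Λ^2*T + Λ*(L/2)) * |w1 - w2|) := by rw [one_mul]; linarith

lemma l1_bound {α : Type*} [MeasurableSpace α] (ν : Measure α) [IsFiniteMeasure ν]
    (f : α → ℝ) (hf : MemLp f 2 ν) (M : ℝ) (hM : (eLpNorm f 2 ν).toReal ≤ M) :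
    ∫ a, ‖f a‖ ∂ν ≤ M * ((ν univ).toReal) ^ (1/2 : ℝ) := by
  have hint : Integrable f ν := hf.integrable one_le_two
  have h1 : eLpNorm f 1 ν = ENNReal.ofReal (∫ a, ‖f a‖ ∂ν) := by
    rw [eLpNorm_one_eq_lintegral_enorm, ← ofReal_integral_norm_eq_lintegral_enorm hint]
  have h2 : eLpNorm f 1 ν ≤ eLpNorm f 2 ν * (ν univ) ^ (1/2 : ℝ) := by
    have h := eLpNorm_le_eLpNorm_mul_rpow_measure_univ (one_le_two) hf.1
    convert h using 2
    norm_num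
  have hfin2 : eLpNorm f 2 ν ≠ ⊤ := hf.eLpNorm_ne_top
  have hfinuniv : (ν univ) ^ (1/2:ℝ) ≠ ⊤ :=
    ENNReal.rpow_ne_top_of_nonneg (by norm_num) (measure_ne_top ν univ)
  calc ∫ a, ‖f a‖ ∂ν = (eLpNorm f 1 ν).toReal := by
        rw [h1, ENNReal.toReal_ofReal (integral_nonneg fun a => norm_nonneg _)]
    _ ≤ (eLpNorm f 2 ν * (ν univ)^(1/2:ℝ)).toReal :=
        ENNReal.toReal_mono (ENNReal.mul_ne_top hfin2 hfinuniv) h2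
    _ = (eLpNorm f 2 ν).toReal * ((ν univ)^(1/2:ℝ)).toReal := ENNReal.toReal_mul
    _ = (eLpNorm f 2 ν).toReal * ((ν univ).toReal)^(1/2:ℝ) := by
        rw [← ENNReal.toReal_rpow]
    _ ≤ M * ((ν univ).toReal)^(1/2:ℝ) := by
        apply mul_le_mul_of_nonneg_right hM
        positivity

lemma integral_complexOfReal {X : Type*} [MeasurableSpace X] {μ' : Measure X} (f : X → ℝ) :
    ∫ x, ((f x : ℝ) : ℂ) ∂μ' = ((∫ x, f x ∂μ' : ℝ) : ℂ) :=
  integral_ofReal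

theorem stmt4 (L T Λ : ℝ) (hL : 0 < L) (hT : 0 < T) (hΛ : 1 ≤ Λ)
    (μ : Measure ℝ) [IsFiniteMeasure μ]
    (v : ℕ → ℝ) (vbar : ℝ) (hv : ∀ n, 0 < v n) (hvbar : 0 < vbar)
    (hvconv : Tendsto v atTop (nhds vbar))
    (g : ℕ → ℝ × ℝ → ℝ) (glim : ℝ × ℝ → ℝ)
    (hg : ∀ n, MemLp (g n) 2 (volume.restrict ((Ioo (-L/2) (L/2)) ×ˢ (Ioo (0:ℝ) T))))
    (hglim : MemLp glim 2 (volume.restrict ((Ioo (-L/2) (L/2)) ×ˢ (Ioo (0:ℝ) T))))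
    (hweak : ∀ h : ℝ × ℝ → ℝ,
      MemLp h 2 (volume.restrict ((Ioo (-L/2) (L/2)) ×ˢ (Ioo (0:ℝ) T))) →
      Tendsto (fun n => ∫ p in (Ioo (-L/2) (L/2)) ×ˢ (Ioo (0:ℝ) T), g n p * h p)
        atTop (nhds (∫ p in (Ioo (-L/2) (L/2)) ×ˢ (Ioo (0:ℝ) T), glim p * h p))) :
    Tendsto
      (fun n => ∫ lam in Icc 1 Λ,
        ‖michellTransform L T (v n) lam (g n)‖ ^ 2 ∂μ)
      atTop
      (nhds (∫ lam in Icc 1 Λ,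
        ‖michellTransform L T vbar lam glim‖ ^ 2 ∂μ)) := by
  set S : Set (ℝ × ℝ) := (Ioo (-L/2) (L/2)) ×ˢ (Ioo (0:ℝ) T) with hS
  have hSmeas : MeasurableSet S := measurableSet_Ioo.prod measurableSet_Ioo
  have hSfin : volume S ≠ ⊤ := by
    rw [hS, MeasureTheory.Measure.volume_eq_prod, Measure.prod_prod, Real.volume_Ioo,
      Real.volume_Ioo]
    exact ENNReal.mul_ne_top ENNReal.ofReal_ne_top ENNReal.ofReal_ne_top
  haveI : IsFiniteMeasure (volume.restrict S) :=
    ⟨by rw [Measure.restrict_apply_univ]; exact hSfin.lt_top⟩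
  have hΛ0 : (0:ℝ) < Λ := lt_of_lt_of_le one_pos hΛ
  have hgint : ∀ n, Integrable (g n) (volume.restrict S) := fun n => (hg n).integrable one_le_two
  -- Step A: uniform L² bound via Banach–Steinhaus
  set G : ℕ → Lp ℝ 2 (volume.restrict S) := fun n => (hg n).toLp (g n) with hG
  have hptwise : ∀ h : Lp ℝ 2 (volume.restrict S), ∃ C, ∀ n, ‖(innerSL ℝ (G n)) h‖ ≤ C := by
    intro h
    have hconv := hweak (⇑h) (Lp.memLp h)
    have heq : ∀ n, (innerSL ℝ (G n)) h = ∫ p in S, g n p * h p := by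
      intro n
      show inner ℝ (G n) h = _
      rw [L2.inner_def]
      refine integral_congr_ae ?_
      filter_upwards [(hg n).coeFn_toLp] with p hp
      simp [hG, hp, RCLike.inner_apply, mul_comm]
    obtain ⟨C, hC⟩ := hconv.norm.bddAbove_range
    refine ⟨C, fun n => ?_⟩
    rw [heq n]
    exact hC ⟨n, rfl⟩
  obtain ⟨M, hM⟩ := banach_steinhaus hptwise
  have hGnorm : ∀ n, (eLpNorm (g n) 2 (volume.restrict S)).toReal ≤ M := by
    intro n
    have := hM n
    rwa [innerSL_apply_norm, hG, Lp.norm_toLp] at this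
  set M1 : ℝ := M * (((volume.restrict S) univ).toReal) ^ (1/2 : ℝ) with hM1
  have hM10 : 0 ≤ M1 := by
    have hM0 : 0 ≤ M := le_trans ENNReal.toReal_nonneg (hGnorm 0)
    positivity
  have hL1 : ∀ n, (∫ p in S, ‖g n p‖) ≤ M1 := fun n =>
    l1_bound (volume.restrict S) (g n) (hg n) M (hGnorm n)
  -- basic rewriting of the transform
  have hmich : ∀ (w lam : ℝ) (f : ℝ × ℝ → ℝ),
      michellTransform L T w lam f = ∫ p in S, (f p : ℂ) * mker w lam p := by
    intro w lam f
    simp only [michellTransform, mker, ← hS]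
    exact integral_congr_ae (Eventually.of_forall fun p => mul_assoc _ _ _)
  -- kernel bounded by 1 a.e.
  have hker_le_one : ∀ {w : ℝ}, 0 ≤ w → ∀ lam : ℝ,
      ∀ᵐ p ∂(volume.restrict S), ‖mker w lam p‖ ≤ 1 := by
    intro w hw lam
    filter_upwards [ae_restrict_mem hSmeas] with p hp
    exact abs_mker_le_one lam hw hp.2.1.le
  -- integrability of g * kernel
  have hIntC : ∀ (f : ℝ × ℝ → ℝ), Integrable f (volume.restrict S) → ∀ {w : ℝ}, 0 ≤ w →
      ∀ lam : ℝ, Integrable (fun p => (f p : ℂ) * mker w lam p) (volume.restrict S) := by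
    intro f hf w hw lam
    have h2 := (hf.ofReal (𝕜 := ℂ)).bdd_mul
      ((continuous_mker' w lam).aestronglyMeasurable) (hker_le_one hw lam)
    simpa [mul_comm] using h2
  -- pointwise (in lam) convergence of the transforms
  have hpt : ∀ lam ∈ Icc (1:ℝ) Λ,
      Tendsto (fun n => michellTransform L T (v n) lam (g n)) atTop
        (𝓝 (michellTransform L T vbar lam glim)) := by
    intro lam hlam
    have hlamabs : |lam| ≤ Λ := by
      rw [_root_.abs_of_nonneg (le_trans zero_le_one hlam.1)]; exact hlam.2
    set C : ℝ := Λ^2*T + Λ*(L/2) with hCdef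
    have hC0 : 0 < C := by rw [hCdef]; positivity
    -- term 2: weak convergence at fixed speed vbar
    set Fre : ℝ × ℝ → ℝ := fun p => (mker vbar lam p).re with hFre
    set Fim : ℝ × ℝ → ℝ := fun p => (mker vbar lam p).im with hFim
    have hmemRe : MemLp Fre 2 (volume.restrict S) := by
      refine MemLp.of_bound
        ((Complex.continuous_re.comp (continuous_mker' vbar lam)).aestronglyMeasurable) 1 ?_
      filter_upwards [ae_restrict_mem hSmeas] with p hp
      rw [hFre]
      exact le_trans (Complex.abs_re_le_norm _) (abs_mker_le_one lam hvbar.le hp.2.1.le)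
    have hmemIm : MemLp Fim 2 (volume.restrict S) := by
      refine MemLp.of_bound
        ((Complex.continuous_im.comp (continuous_mker' vbar lam)).aestronglyMeasurable) 1 ?_
      filter_upwards [ae_restrict_mem hSmeas] with p hp
      rw [hFim]
      exact le_trans (Complex.abs_im_le_norm _) (abs_mker_le_one lam hvbar.le hp.2.1.le)
    have h2re := hweak Fre hmemRe
    have h2im := hweak Fim hmemIm
    have hIntRe : ∀ (f : ℝ × ℝ → ℝ), Integrable f (volume.restrict S) →
        Integrable (fun p => f p * Fre p) (volume.restrict S) := by
      intro f hf
      have h2 := hf.bdd_mul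
        ((Complex.continuous_re.comp (continuous_mker' vbar lam)).aestronglyMeasurable)
        (c := 1) ?_
      · simpa [mul_comm] using h2
      · filter_upwards [ae_restrict_mem hSmeas] with p hp
        exact le_trans (Complex.abs_re_le_norm _) (abs_mker_le_one lam hvbar.le hp.2.1.le)
    have hIntIm : ∀ (f : ℝ × ℝ → ℝ), Integrable f (volume.restrict S) →
        Integrable (fun p => f p * Fim p) (volume.restrict S) := by
      intro f hf
      have h2 := hf.bdd_mul
        ((Complex.continuous_im.comp (continuous_mker' vbar lam)).aestronglyMeasurable)
        (c := 1) ?_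
      · simpa [mul_comm] using h2
      · filter_upwards [ae_restrict_mem hSmeas] with p hp
        exact le_trans (Complex.abs_im_le_norm _) (abs_mker_le_one lam hvbar.le hp.2.1.le)
    have hdecomp : ∀ f : ℝ × ℝ → ℝ, Integrable f (volume.restrict S) →
        michellTransform L T vbar lam f
          = ((∫ p in S, f p * Fre p : ℝ) : ℂ) + ((∫ p in S, f p * Fim p : ℝ) : ℂ) * Complex.I := by
      intro f hf
      rw [hmich]
      have heq : (fun p => (f p : ℂ) * mker vbar lam p)
          =ᵐ[volume.restrict S]
          fun p => ((f p * Fre p : ℝ) : ℂ) + ((f p * Fim p : ℝ) : ℂ) * Complex.I := by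
        refine Eventually.of_forall fun p => ?_
        rw [hFre, hFim]
        apply Complex.ext <;> simp
      calc ∫ p in S, (f p : ℂ) * mker vbar lam p
          = ∫ p in S, (((f p * Fre p : ℝ) : ℂ) + ((f p * Fim p : ℝ) : ℂ) * Complex.I) :=
            integral_congr_ae heq
        _ = (∫ p in S, ((f p * Fre p : ℝ) : ℂ))
            + ∫ p in S, ((f p * Fim p : ℝ) : ℂ) * Complex.I :=
            integral_add ((hIntRe f hf).ofReal) (((hIntIm f hf).ofReal).mul_const Complex.I)
        _ = (∫ p in S, ((f p * Fre p : ℝ) : ℂ))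
            + (∫ p in S, ((f p * Fim p : ℝ) : ℂ)) * Complex.I := by
            rw [integral_mul_const]
        _ = ((∫ p in S, f p * Fre p : ℝ) : ℂ) + ((∫ p in S, f p * Fim p : ℝ) : ℂ) * Complex.I := by
            rw [integral_complexOfReal, integral_complexOfReal]
    have hterm2 : Tendsto (fun n => michellTransform L T vbar lam (g n)) atTop
        (𝓝 (michellTransform L T vbar lam glim)) := by
      have h := ((Complex.continuous_ofReal.tendsto _).comp h2re).add
        (((Complex.continuous_ofReal.tendsto _).comp h2im).mul_const Complex.I)
      rw [hdecomp glim (hglim.integrable one_le_two)]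
      exact h.congr fun n => (hdecomp (g n) (hgint n)).symm
    -- term 1: speed change
    have habs0 : Tendsto (fun n => |v n - vbar|) atTop (𝓝 0) := by
      have := (hvconv.sub (tendsto_const_nhds (x := vbar))).abs
      simpa using this
    have hterm1 : Tendsto (fun n => michellTransform L T (v n) lam (g n)
        - michellTransform L T vbar lam (g n)) atTop (𝓝 0) := by
      have hb : Tendsto (fun n => 2 * (C * |v n - vbar|) * M1) atTop (𝓝 0) := by
        have := ((habs0.const_mul C).const_mul 2).mul_const M1
        simpa using this
      have hev : ∀ᶠ n in atTop, C * |v n - vbar| ≤ 1 := by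
        have h0 : Tendsto (fun n => C * |v n - vbar|) atTop (𝓝 0) := by
          simpa using habs0.const_mul C
        exact h0.eventually (eventually_le_nhds one_pos)
      apply squeeze_zero_norm' ?_ hb
      filter_upwards [hev] with n hn
      have hsubint : michellTransform L T (v n) lam (g n) - michellTransform L T vbar lam (g n)
          = ∫ p in S, (g n p : ℂ) * (mker (v n) lam p - mker vbar lam p) := by
        rw [hmich, hmich, ← integral_sub (hIntC _ (hgint n) (hv n).le lam)
          (hIntC _ (hgint n) hvbar.le lam)]
        exact integral_congr_ae (Eventually.of_forall fun p => by ring)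
      rw [hsubint]
      have hIb : Integrable (fun p => 2*(C*|v n - vbar|) * ‖g n p‖) (volume.restrict S) :=
        (hgint n).norm.const_mul _
      refine le_trans (norm_integral_le_of_norm_le hIb ?_) ?_
      · filter_upwards [ae_restrict_mem hSmeas] with p hp
        rw [norm_mul, Complex.norm_real]
        have hker : ‖mker (v n) lam p - mker vbar lam p‖ ≤ 2 * (C * |v n - vbar|) := by
          refine abs_mker_sub_le hvbar.le hp.2.1.le hp.2.2.le ?_ hlamabs hΛ0.le hn
          exact abs_le.mpr ⟨by linarith [hp.1.1], hp.1.2.le⟩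
        calc ‖g n p‖ * ‖mker (v n) lam p - mker vbar lam p‖
            ≤ ‖g n p‖ * (2 * (C * |v n - vbar|)) :=
              mul_le_mul_of_nonneg_left hker (norm_nonneg _)
          _ = 2 * (C * |v n - vbar|) * ‖g n p‖ := by ring
      · rw [integral_const_mul]
        calc 2*(C*|v n - vbar|) * ∫ p in S, ‖g n p‖
            ≤ 2*(C*|v n - vbar|) * M1 := by
              apply mul_le_mul_of_nonneg_left (hL1 n)
              positivity
          _ ≤ 2*(C*|v n - vbar|) * M1 := le_rfl
    have := hterm1.add hterm2
    simpa using this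
  -- uniform bound on transforms
  have habsb : ∀ n, ∀ lam ∈ Icc (1:ℝ) Λ,
      ‖michellTransform L T (v n) lam (g n)‖ ≤ M1 := by
    intro n lam _
    rw [hmich]
    refine le_trans (norm_integral_le_of_norm_le ((hgint n).norm ) ?_) (hL1 n)
    filter_upwards [hker_le_one (hv n).le lam] with p hp
    rw [norm_mul, Complex.norm_real]
    exact mul_le_of_le_one_right (norm_nonneg _) hp
  -- continuity in lam, for measurability
  have hcont : ∀ n, Continuous fun lam => michellTransform L T (v n) lam (g n) := by
    intro n
    have hc2 : (fun lam => michellTransform L T (v n) lam (g n))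
        = fun lam => ∫ p in S, ((g n p : ℝ) : ℂ) * mker (v n) lam p :=
      funext fun lam => hmich (v n) lam (g n)
    rw [hc2]
    refine continuous_of_dominated
      (fun lam => (hIntC _ (hgint n) (hv n).le lam).1) (fun lam => ?_)
      (hgint n).norm (Eventually.of_forall fun p => ?_)
    · filter_upwards [hker_le_one (hv n).le lam] with p hp
      rw [norm_mul, Complex.norm_real]
      exact mul_le_of_le_one_right (norm_nonneg _) hp
    · exact continuous_const.mul (continuous_mker (v n) p)
  -- dominated convergence in lam
  refine tendsto_integral_of_dominated_convergence (fun _ => M1 ^ 2)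
    (fun n => (((continuous_norm.comp (hcont n)).pow 2).aestronglyMeasurable))
    (integrable_const _) (fun n => ?_) ?_
  · filter_upwards [ae_restrict_mem measurableSet_Icc] with lam hlam
    rw [Real.norm_eq_abs, _root_.abs_of_nonneg (by positivity)]
    exact pow_le_pow_left₀ (norm_nonneg _) (habsb n lam hlam) 2
  · filter_upwards [ae_restrict_mem measurableSet_Icc] with lam hlam
    have h := (hpt lam hlam).norm.pow 2
    exact h
end
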